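/- Suppose g^e, g^o : ℝ → GL(n,ℂ) are differentiable matrix-valued curves satisfying the system ġ^e = g^e Π_𝔨(i (g^o g^e)^k) − Π_𝔨(i (g^e g^o)^k) g^e and ġ^o = g^o Π_𝔨(i (g^e g^o)^k) − Π_𝔨(i (g^o g^e)^k) g^o. Then the product g = g^e g^o satisfies the Lax equation ġ = g Π_𝔨(i g^k) − Π_𝔨(i g^k) g. -/

import Mathlib

open Matrix

noncomputable section

/-- The strictly upper triangular part `X₊` of a complex matrix. -/
def strictUpper {n : ℕ} (X : Matrix (Fin n) (Fin n) ℂ) : Matrix (Fin n) (Fin n) ℂ :=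
  Matrix.of fun i j => if i < j then X i j else 0

/-- The projection `Π_𝔨 X = X₊ − (X₊)*` onto skew-Hermitian matrices. -/
def Pik {n : ℕ} (X : Matrix (Fin n) (Fin n) ℂ) : Matrix (Fin n) (Fin n) ℂ :=
  strictUpper X - (strictUpper X)ᴴ

/-- If differentiable curves `g^e, g^o` of invertible matrices satisfy
`ġ^e = g^e Π_𝔨(i (g^o g^e)^k) − Π_𝔨(i (g^e g^o)^k) g^e` and
`ġ^o = g^o Π_𝔨(i (g^e g^o)^k) − Π_𝔨(i (g^o g^e)^k) g^o`, then the product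
`g = g^e g^o` satisfies the Lax equation `ġ = g Π_𝔨(i g^k) − Π_𝔨(i g^k) g`. -/
theorem stmt_19 (n k : ℕ) (hk : 0 < k) (ge go : ℝ → Matrix (Fin n) (Fin n) ℂ)
    (hinv1 : ∀ t : ℝ, IsUnit (ge t)) (hinv2 : ∀ t : ℝ, IsUnit (go t))
    (h1 : ∀ (t : ℝ) (i j : Fin n), HasDerivAt (fun s => ge s i j)
        ((ge t * Pik (Complex.I • (go t * ge t) ^ k)
          - Pik (Complex.I • (ge t * go t) ^ k) * ge t) i j) t)
    (h2 : ∀ (t : ℝ) (i j : Fin n), HasDerivAt (fun s => go s i j)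
        ((go t * Pik (Complex.I • (ge t * go t) ^ k)
          - Pik (Complex.I • (go t * ge t) ^ k) * go t) i j) t) :
    ∀ (t : ℝ) (i j : Fin n), HasDerivAt (fun s => (ge s * go s) i j)
        ((ge t * go t * Pik (Complex.I • (ge t * go t) ^ k)
          - Pik (Complex.I • (ge t * go t) ^ k) * (ge t * go t)) i j) t := by
  intro t i j
  set A := Pik (Complex.I • (go t * ge t) ^ k) with hA
  set B := Pik (Complex.I • (ge t * go t) ^ k) with hB
  set E := ge t * A - B * ge t with hE
  set O := go t * B - A * go t with hO
  have key : E * go t + ge t * O = ge t * go t * B - B * (ge t * go t) := by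
    rw [hE, hO]; noncomm_ring
  have hfun : (fun s => (ge s * go s) i j) = fun s => ∑ l, ge s i l * go s l j := by
    funext s; simp [Matrix.mul_apply]
  have hd : HasDerivAt (fun s => ∑ l, ge s i l * go s l j)
      (∑ l, (E i l * go t l j + ge t i l * O l j)) t := by
    apply HasDerivAt.fun_sum
    intro l _
    exact (h1 t i l).mul (h2 t l j)
  rw [hfun]
  convert hd using 1
  calc (ge t * go t * B - B * (ge t * go t)) i j
      = (E * go t + ge t * O) i j := by rw [key]
    _ = ∑ l, (E i l * go t l j + ge t i l * O l j) := by
        simp [Matrix.add_apply, Matrix.mul_apply, Finset.sum_add_distrib]
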